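/- The sup-irreducible elements of the space of proper convex lower semicontinuous functions on a locally convex Hausdorff topological vector space X are exactly the continuous affine maps x ↦ ⟨p, x⟩ + λ with p ∈ X* and λ ∈ ℝ. -/

import Mathlib

/-- Proper convex lower semicontinuous functions with values in `(-∞, +∞]`
(seen inside `EReal`). -/
def PCLsc {X : Type*} [AddCommGroup X] [Module ℝ X] [TopologicalSpace X] :
    Set (X → EReal) :=
  {f | (∀ x, f x ≠ ⊥) ∧ (∃ x, f x ≠ ⊤) ∧ LowerSemicontinuous f ∧
    ∀ x y : X, ∀ t : ℝ, t ∈ Set.Ioo (0 : ℝ) 1 →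
      f (t • x + (1 - t) • y) ≤ (t : EReal) * f x + ((1 - t : ℝ) : EReal) * f y}

/-- `f` is a sup-irreducible element of `G`. -/
def SupIrredIn {X : Type*} (G : Set (X → EReal)) (f : X → EReal) : Prop :=
  f ∈ G ∧ ∀ g ∈ G, ∀ h ∈ G, f = g ⊔ h → f = g ∨ f = h

set_option linter.unusedSectionVars false

namespace Stmt18Aux

variable {X : Type*} [AddCommGroup X] [Module ℝ X] [TopologicalSpace X]

noncomputable def aff (p : X →L[ℝ] ℝ) (l : ℝ) : X → EReal := fun x => ((p x + l : ℝ) : EReal)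

lemma aff_comb (p : X →L[ℝ] ℝ) (l : ℝ) (x y : X) (t : ℝ) :
    aff p l (t • x + (1 - t) • y)
      = (t : EReal) * aff p l x + ((1 - t : ℝ) : EReal) * aff p l y := by
  simp only [aff, map_add, map_smul, smul_eq_mul, ← EReal.coe_mul, ← EReal.coe_add]
  exact congrArg _ (by ring)

lemma aff_mem (p : X →L[ℝ] ℝ) (l : ℝ) : aff p l ∈ PCLsc := by
  refine ⟨fun x => EReal.coe_ne_bot _, ⟨0, EReal.coe_ne_top _⟩, ?_,
    fun x y t _ => le_of_eq (aff_comb p l x y t)⟩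
  exact (continuous_coe_real_ereal.comp ((p.continuous).add continuous_const)).lowerSemicontinuous

lemma aff_supirred (p : X →L[ℝ] ℝ) (l : ℝ) : SupIrredIn PCLsc (aff p l) := by
  refine ⟨aff_mem p l, fun g hg h hh heq => ?_⟩
  by_contra hc
  push_neg at hc
  obtain ⟨hcg, hch⟩ := hc
  have hg1 : g ≤ aff p l := by rw [heq]; exact le_sup_left
  have hh1 : h ≤ aff p l := by rw [heq]; exact le_sup_right
  obtain ⟨x, hx⟩ : ∃ x, g x ≠ aff p l x := by
    by_contra hAll; push_neg at hAll; exact hcg (funext fun z => (hAll z).symm)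
  obtain ⟨y, hy⟩ : ∃ y, h y ≠ aff p l y := by
    by_contra hAll; push_neg at hAll; exact hch (funext fun z => (hAll z).symm)
  have hgx : g x < aff p l x := (hg1 x).lt_of_ne hx
  have hhy : h y < aff p l y := (hh1 y).lt_of_ne hy
  have key : ∀ g' : X → EReal, g' ∈ PCLsc → g' ≤ aff p l → ∀ u v : X,
      aff p l ((1/2 : ℝ) • u + (1 - (1/2:ℝ)) • v) = g' ((1/2 : ℝ) • u + (1 - (1/2:ℝ)) • v) →
      g' u < aff p l u → g' v ≤ aff p l v → False := by
    intro g' hg' hle u v heqm hltx hlty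
    have gxt : g' u = ((g' u).toReal : EReal) :=
      (EReal.coe_toReal ((hle u).trans_lt (EReal.coe_lt_top _)).ne (hg'.1 u)).symm
    have gyt : g' v = ((g' v).toReal : EReal) :=
      (EReal.coe_toReal ((hle v).trans_lt (EReal.coe_lt_top _)).ne (hg'.1 v)).symm
    set a := (g' u).toReal
    set b := (g' v).toReal
    have h2 := hg'.2.2.2 u v (1/2) ⟨by norm_num, by norm_num⟩
    rw [gxt, gyt, ← EReal.coe_mul, ← EReal.coe_mul, ← EReal.coe_add] at h2
    have h3 := aff_comb p l u v (1/2)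
    simp only [aff, ← EReal.coe_mul, ← EReal.coe_add] at h3
    rw [← heqm] at h2
    simp only [aff] at h2
    rw [h3] at h2
    have hax : a < p u + l := by
      rw [gxt] at hltx; exact EReal.coe_lt_coe_iff.1 hltx
    have hby : b ≤ p v + l := by
      rw [gyt] at hlty; exact EReal.coe_le_coe_iff.1 hlty
    have := EReal.coe_le_coe_iff.1 h2
    linarith
  have hsum : ∀ z : X, aff p l z = g z ⊔ h z := fun z => congrFun heq z
  rcases le_total (h ((1/2 : ℝ) • x + (1 - (1/2:ℝ)) • y)) (g ((1/2 : ℝ) • x + (1 - (1/2:ℝ)) • y))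
    with hcase | hcase
  · exact key g hg hg1 x y (by rw [hsum, sup_eq_left.2 hcase]) hgx (hg1 y)
  · have hmeq : (1/2:ℝ) • y + (1 - (1/2:ℝ)) • x = (1/2:ℝ) • x + (1 - (1/2:ℝ)) • y := by
      norm_num; module
    refine key h hh hh1 y x ?_ hhy (hh1 x)
    rw [hmeq, hsum, sup_eq_right.2 hcase]


def Minor (f : X → EReal) (p : X →L[ℝ] ℝ) (l : ℝ) : Prop :=
  ∀ x, ((p x + l : ℝ) : EReal) ≤ f x

lemma ereal_le_of_forall_real_lt {a b : EReal} (h : ∀ r : ℝ, (r:EReal) < a → (r:EReal) ≤ b) :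
    a ≤ b := by
  by_contra hby
  push_neg at hby
  obtain ⟨r, hbr, hra⟩ := EReal.exists_between_coe_real hby
  exact absurd (h r hra) (not_le.2 hbr)

noncomputable def msup (f : X → EReal) (P : (X →L[ℝ] ℝ) × ℝ → Prop) : X → EReal :=
  fun x => ⨆ q : {q : (X →L[ℝ] ℝ) × ℝ // Minor f q.1 q.2 ∧ P q}, aff q.1.1 q.1.2 x

lemma msup_le {f : X → EReal} {P : (X →L[ℝ] ℝ) × ℝ → Prop} (x : X) : msup f P x ≤ f x :=
  iSup_le fun q => q.2.1 x

lemma le_msup {f : X → EReal} {P : (X →L[ℝ] ℝ) × ℝ → Prop} {q : (X →L[ℝ] ℝ) × ℝ}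
    (hq : Minor f q.1 q.2 ∧ P q) (x : X) : aff q.1 q.2 x ≤ msup f P x :=
  le_iSup_of_le ⟨q, hq⟩ le_rfl

lemma msup_mem {f : X → EReal} {P : (X →L[ℝ] ℝ) × ℝ → Prop} (hf : f ∈ PCLsc)
    (hne : ∃ q : (X →L[ℝ] ℝ) × ℝ, Minor f q.1 q.2 ∧ P q) : msup f P ∈ PCLsc := by
  obtain ⟨q₀, hq₀⟩ := hne
  refine ⟨fun x => ?_, ?_, ?_, ?_⟩
  · exact ne_of_gt (lt_of_lt_of_le (EReal.bot_lt_coe _) (le_msup hq₀ x))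
  · obtain ⟨x₀, hx₀⟩ := hf.2.1
    exact ⟨x₀, fun htop => hx₀ (top_le_iff.1 (htop ▸ msup_le x₀))⟩
  · exact lowerSemicontinuous_iSup fun q =>
      (continuous_coe_real_ereal.comp ((q.1.1.continuous).add continuous_const)).lowerSemicontinuous
  · intro x y t ht
    refine iSup_le fun q => ?_
    rw [show aff q.1.1 q.1.2 (t • x + (1 - t) • y)
        = (t : EReal) * aff q.1.1 q.1.2 x + ((1 - t : ℝ) : EReal) * aff q.1.1 q.1.2 y from
      aff_comb _ _ x y t]
    exact add_le_add
      (mul_le_mul_of_nonneg_left (le_msup q.2 x) (by exact_mod_cast ht.1.le))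
      (mul_le_mul_of_nonneg_left (le_msup q.2 y) (by exact_mod_cast (by linarith [ht.2] : (0:ℝ) ≤ 1 - t)))



section Sep
variable [IsTopologicalAddGroup X] [ContinuousSMul ℝ X] [LocallyConvexSpace ℝ X]
variable {f : X → EReal}

lemma epi_closed (hf : f ∈ PCLsc) : IsClosed {z : X × ℝ | f z.1 ≤ (z.2 : EReal)} :=
  hf.2.2.1.isClosed_epigraph.preimage
    (continuous_fst.prodMk (continuous_coe_real_ereal.comp continuous_snd))

lemma epi_convex (hf : f ∈ PCLsc) : Convex ℝ {z : X × ℝ | f z.1 ≤ (z.2 : EReal)} := by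
  rintro z hz w hw a b ha hb hab
  rcases ha.eq_or_lt with rfl | ha0
  · simpa [show b = 1 by linarith] using hw
  rcases hb.eq_or_lt with rfl | hb0
  · simpa [show a = 1 by linarith] using hz
  have ha1 : a < 1 := by linarith
  have hconv := hf.2.2.2 z.1 w.1 a ⟨ha0, ha1⟩
  have hb' : (1 - a) = b := by linarith
  rw [hb'] at hconv
  have h1 : (a : EReal) * f z.1 ≤ (a : EReal) * (z.2 : EReal) :=
    mul_le_mul_of_nonneg_left hz (by exact_mod_cast ha)
  have h2 : (b : EReal) * f w.1 ≤ (b : EReal) * (w.2 : EReal) :=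
    mul_le_mul_of_nonneg_left hw (by exact_mod_cast hb)
  have : f (a • z.1 + b • w.1) ≤ ((a * z.2 + b * w.2 : ℝ) : EReal) := by
    refine hconv.trans ((add_le_add h1 h2).trans ?_)
    rw [EReal.coe_add, EReal.coe_mul, EReal.coe_mul]
  show f ((a • z + b • w).1) ≤ (((a • z + b • w).2 : ℝ) : EReal)
  simpa [Prod.smul_fst, Prod.smul_snd, smul_eq_mul] using this

lemma sep_core (hf : f ∈ PCLsc) (x₁ : X) (r : ℝ) (hout : ¬ f x₁ ≤ (r : EReal)) :
    ∃ (p : X →L[ℝ] ℝ) (s u : ℝ),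
      (∀ x : X, ∀ t : ℝ, f x ≤ (t : EReal) → p x + t * s < u) ∧ u < p x₁ + r * s := by
  obtain ⟨q, u, hq1, hq2⟩ :=
    geometric_hahn_banach_closed_point (epi_convex hf) (epi_closed hf)
      (show ((x₁, r) : X × ℝ) ∉ {z : X × ℝ | f z.1 ≤ (z.2 : EReal)} from hout)
  have hdec : ∀ (x : X) (t : ℝ), q (x, t) = q.comp (ContinuousLinearMap.inl ℝ X ℝ) x
      + t * q ((0 : X), (1 : ℝ)) := by
    intro x t
    have hxt : (x, t) = ((x, (0:ℝ)) + t • ((0:X), (1:ℝ))) := by simp [Prod.ext_iff]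
    rw [hxt, map_add, map_smul, smul_eq_mul]
    simp [ContinuousLinearMap.comp_apply, ContinuousLinearMap.inl_apply]
  refine ⟨q.comp (ContinuousLinearMap.inl ℝ X ℝ), q ((0:X), (1:ℝ)), u, ?_, ?_⟩
  · intro x t hxt
    have := hq1 (x, t) hxt
    rwa [hdec x t] at this
  · have := hq2
    rwa [hdec x₁ r] at this

lemma build_minor {p : X →L[ℝ] ℝ} {s u : ℝ}
    (h1 : ∀ x : X, ∀ t : ℝ, f x ≤ (t : EReal) → p x + t * s < u) (hs : s < 0)
    (hbot : ∀ x, f x ≠ ⊥) :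
    Minor f ((-s)⁻¹ • p) (-(u * (-s)⁻¹)) := by
  intro x
  set σ := -s with hσ
  have hσ0 : 0 < σ := by simp [hσ]; linarith
  by_cases hx : f x = ⊤
  · rw [hx]; exact le_top
  · have hfx : f x = (((f x).toReal : ℝ) : EReal) := (EReal.coe_toReal hx (hbot x)).symm
    set t := (f x).toReal
    have := h1 x t (le_of_eq hfx)
    have hval : (σ⁻¹ • p) x + -(u * σ⁻¹) ≤ t := by
      have hp : (σ⁻¹ • p) x = σ⁻¹ * p x := by
        simp [ContinuousLinearMap.smul_apply, smul_eq_mul]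
      rw [hp, show σ⁻¹ * p x + -(u * σ⁻¹) = (p x - u) / σ by ring, div_le_iff₀ hσ0]
      have hts : t * σ = -(t * s) := by rw [hσ]; ring
      linarith
    rw [hfx]
    exact EReal.coe_le_coe_iff.2 hval

lemma minor_of_lt_ne_top (hf : f ∈ PCLsc) (x₁ : X) (r : ℝ) (hr : (r : EReal) < f x₁)
    (htop : f x₁ ≠ ⊤) : ∃ p l, Minor f p l ∧ r < p x₁ + l := by
  obtain ⟨p, s, u, h1, h2⟩ := sep_core hf x₁ r (not_le.2 hr)
  set ρ := (f x₁).toReal with hρdef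
  have hfx : f x₁ = ((ρ : ℝ) : EReal) := (EReal.coe_toReal htop (hf.1 x₁)).symm
  have hrρ : r < ρ := by rw [hfx] at hr; exact_mod_cast hr
  have hmem := h1 x₁ ρ (le_of_eq hfx)
  have hs : s < 0 := by nlinarith
  refine ⟨(-s)⁻¹ • p, -(u * (-s)⁻¹), build_minor h1 hs hf.1, ?_⟩
  have hσ0 : 0 < -s := by linarith
  have hp : ((-s)⁻¹ • p) x₁ = (-s)⁻¹ * p x₁ := by
    simp [ContinuousLinearMap.smul_apply, smul_eq_mul]
  rw [hp, show (-s)⁻¹ * p x₁ + -(u * (-s)⁻¹) = (p x₁ - u) / (-s) by ring, lt_div_iff₀ hσ0]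
  have hts : r * -s = -(r * s) := by ring
  linarith

lemma minor_exists (hf : f ∈ PCLsc) : ∃ p l, Minor f p l := by
  obtain ⟨x₀, hx₀⟩ := hf.2.1
  have hfx : f x₀ = (((f x₀).toReal : ℝ) : EReal) := (EReal.coe_toReal hx₀ (hf.1 x₀)).symm
  obtain ⟨p, l, hm, -⟩ := minor_of_lt_ne_top hf x₀ ((f x₀).toReal - 1)
    (by rw [hfx]; exact_mod_cast (by linarith : (f x₀).toReal - 1 < (f x₀).toReal)) hx₀
  exact ⟨p, l, hm⟩

lemma minor_dense (hf : f ∈ PCLsc) (x₁ : X) (r : ℝ) (hr : (r : EReal) < f x₁) :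
    ∃ p l, Minor f p l ∧ r < p x₁ + l := by
  by_cases htop : f x₁ = ⊤
  swap
  · exact minor_of_lt_ne_top hf x₁ r hr htop
  obtain ⟨p, s, u, h1, h2⟩ := sep_core hf x₁ r (by rw [htop]; simp)
  obtain ⟨x₀, hx₀⟩ := hf.2.1
  set ρ₀ := (f x₀).toReal with hρdef
  have hfx₀ : f x₀ = ((ρ₀ : ℝ) : EReal) := (EReal.coe_toReal hx₀ (hf.1 x₀)).symm
  have hs : s ≤ 0 := by
    by_contra hs
    push_neg at hs
    have ht1 : ρ₀ ≤ max ρ₀ ((u - p x₀) / s) + 1 := by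
      have := le_max_left ρ₀ ((u - p x₀) / s); linarith
    have ht2 : (u - p x₀) / s < max ρ₀ ((u - p x₀) / s) + 1 := by
      have := le_max_right ρ₀ ((u - p x₀) / s); linarith
    have := h1 x₀ _ (hfx₀.le.trans (EReal.coe_le_coe_iff.2 ht1))
    rw [div_lt_iff₀ hs] at ht2
    linarith
  rcases hs.lt_or_eq with hs | rfl
  · refine ⟨(-s)⁻¹ • p, -(u * (-s)⁻¹), build_minor h1 hs hf.1, ?_⟩
    have hσ0 : 0 < -s := by linarith
    have hp : ((-s)⁻¹ • p) x₁ = (-s)⁻¹ * p x₁ := by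
      simp [ContinuousLinearMap.smul_apply, smul_eq_mul]
    rw [hp, show (-s)⁻¹ * p x₁ + -(u * (-s)⁻¹) = (p x₁ - u) / (-s) by ring, lt_div_iff₀ hσ0]
    have hts : r * -s = -(r * s) := by ring
    linarith
  · -- s = 0
    simp only [mul_zero, add_zero] at h1 h2
    obtain ⟨p₀, l₀, hm₀⟩ := minor_exists hf
    set τ := max 0 ((r - (p₀ x₁ + l₀)) / (p x₁ - u)) + 1 with hτdef
    have hτ0 : 0 < τ := by
      have := le_max_left (0:ℝ) ((r - (p₀ x₁ + l₀)) / (p x₁ - u)); rw [hτdef]; linarith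
    have hpu : u < p x₁ := h2
    refine ⟨p₀ + τ • p, l₀ - τ * u, ?_, ?_⟩
    · intro x
      by_cases hx : f x = ⊤
      · rw [hx]; exact le_top
      · have hfx : f x = (((f x).toReal : ℝ) : EReal) := (EReal.coe_toReal hx (hf.1 x)).symm
        set t := (f x).toReal
        have hpx := h1 x t (le_of_eq hfx)
        have hp₀x : p₀ x + l₀ ≤ t := by
          have := hm₀ x
          rw [hfx] at this
          exact_mod_cast this
        rw [hfx]
        apply EReal.coe_le_coe_iff.2
        have happ : (p₀ + τ • p) x = p₀ x + τ * p x := by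
          simp [ContinuousLinearMap.add_apply, ContinuousLinearMap.smul_apply, smul_eq_mul]
        rw [happ]
        nlinarith
    · have happ : (p₀ + τ • p) x₁ = p₀ x₁ + τ * p x₁ := by
        simp [ContinuousLinearMap.add_apply, ContinuousLinearMap.smul_apply, smul_eq_mul]
      rw [happ]
      have hτ2 : (r - (p₀ x₁ + l₀)) / (p x₁ - u) < τ := by
        have := le_max_right (0:ℝ) ((r - (p₀ x₁ + l₀)) / (p x₁ - u)); rw [hτdef]; linarith
      rw [div_lt_iff₀ (by linarith : (0:ℝ) < p x₁ - u)] at hτ2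
      nlinarith


end Sep

section Hard
variable [IsTopologicalAddGroup X] [ContinuousSMul ℝ X] [LocallyConvexSpace ℝ X]

lemma irred_affine {f : X → EReal} (hf : SupIrredIn PCLsc f) :
    ∃ (p : X →L[ℝ] ℝ) (l : ℝ), f = aff p l := by
  obtain ⟨hmem, hirr⟩ := hf
  obtain ⟨x₀, hx₀⟩ := hmem.2.1
  have hb₀ := hmem.1 x₀
  set ρ₀ := (f x₀).toReal with hρdef
  have hfx₀ : f x₀ = ((ρ₀ : ℝ) : EReal) := (EReal.coe_toReal hx₀ hb₀).symm
  by_cases hsame : ∀ (p : X →L[ℝ] ℝ) (l : ℝ) (p' : X →L[ℝ] ℝ) (l' : ℝ),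
      Minor f p l → Minor f p' l' → p = p'
  · obtain ⟨p, l₀, hpl₀⟩ := minor_exists hmem
    have hSbdd : BddAbove {l : ℝ | Minor f p l} := by
      refine ⟨ρ₀ - p x₀, fun l hl => ?_⟩
      have := hl x₀
      rw [hfx₀] at this
      have := EReal.coe_le_coe_iff.1 this
      linarith
    set L := sSup {l : ℝ | Minor f p l} with hLdef
    refine ⟨p, L, funext fun x => le_antisymm ?_ ?_⟩
    · apply ereal_le_of_forall_real_lt
      intro r hr
      obtain ⟨p', l', hm', hval⟩ := minor_dense hmem x r hr
      have hpp : p' = p := hsame p' l' p l₀ hm' hpl₀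
      rw [hpp] at hm' hval
      have hlL : l' ≤ L := le_csSup hSbdd hm'
      exact EReal.coe_le_coe_iff.2 (by linarith)
    · apply ereal_le_of_forall_real_lt
      intro r hr
      simp only [aff] at hr
      have hrL : r - p x < L := by
        have := EReal.coe_lt_coe_iff.1 hr; linarith
      obtain ⟨l, hl, hgt⟩ := exists_lt_of_lt_csSup ⟨l₀, show l₀ ∈ {l : ℝ | Minor f p l} from hpl₀⟩ hrL
      exact le_trans (EReal.coe_le_coe_iff.2 (by linarith)) (hl x)
  · push_neg at hsame
    obtain ⟨p₁, l₁, p₂, l₂, hm₁, hm₂, hpp⟩ := hsame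
    have hex : ∃ (pa : X →L[ℝ] ℝ) (la : ℝ) (pb : X →L[ℝ] ℝ) (lb : ℝ) (v : X),
        Minor f pa la ∧ Minor f pb lb ∧ pa v < pb v := by
      obtain ⟨v, hv⟩ : ∃ v, p₁ v ≠ p₂ v := by
        by_contra hc; push_neg at hc; exact hpp (ContinuousLinearMap.ext hc)
      rcases lt_or_gt_of_ne hv with h | h
      · exact ⟨p₁, l₁, p₂, l₂, v, hm₁, hm₂, h⟩
      · exact ⟨p₂, l₂, p₁, l₁, v, hm₂, hm₁, h⟩
    obtain ⟨pa, la, pb, lb, v, hma, hmb, hv⟩ := hex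
    set c := (pa v + pb v) / 2 with hcdef
    have hac : pa v < c := by rw [hcdef]; linarith
    have hcb : c < pb v := by rw [hcdef]; linarith
    set g := msup f (fun q => q.1 v ≤ c) with hgdef
    set h := msup f (fun q => c ≤ q.1 v) with hhdef
    have hgP : g ∈ PCLsc := msup_mem hmem ⟨(pa, la), hma, hac.le⟩
    have hhP : h ∈ PCLsc := msup_mem hmem ⟨(pb, lb), hmb, hcb.le⟩
    have hsup : f = g ⊔ h := by
      funext x
      rw [Pi.sup_apply]
      refine le_antisymm ?_ (sup_le (msup_le x) (msup_le x))
      apply ereal_le_of_forall_real_lt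
      intro r hr
      obtain ⟨p', l', hm', hval⟩ := minor_dense hmem x r hr
      rcases le_total (p' v) c with hc' | hc'
      · exact le_sup_of_le_left ((EReal.coe_le_coe_iff.2 hval.le).trans
          (le_msup (q := (p', l')) ⟨hm', hc'⟩ x))
      · exact le_sup_of_le_right ((EReal.coe_le_coe_iff.2 hval.le).trans
          (le_msup (q := (p', l')) ⟨hm', hc'⟩ x))
    rcases hirr g hgP h hhP hsup with hfg | hfh
    · -- f = g : contradiction along +v
      have hbc' : 0 < pb v - c := by linarith
      set t := max 0 ((ρ₀ - (pb x₀ + lb)) / (pb v - c)) + 1 with htdef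
      have ht0 : 0 ≤ t := by
        have := le_max_left (0:ℝ) ((ρ₀ - (pb x₀ + lb)) / (pb v - c)); rw [htdef]; linarith
      have htineq : ρ₀ + t * c < pb x₀ + lb + t * pb v := by
        have h2 : (ρ₀ - (pb x₀ + lb)) / (pb v - c) < t := by
          have := le_max_right (0:ℝ) ((ρ₀ - (pb x₀ + lb)) / (pb v - c)); rw [htdef]; linarith
        rw [div_lt_iff₀ hbc'] at h2
        nlinarith
      have hgle : g (x₀ + t • v) ≤ ((ρ₀ + t * c : ℝ) : EReal) := by
        refine iSup_le ?_
        rintro ⟨⟨q, lq⟩, hq, hqc⟩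
        have h1 : q x₀ + lq ≤ ρ₀ := by
          have := hq x₀; rw [hfx₀] at this; exact EReal.coe_le_coe_iff.1 this
        have h2 : q (x₀ + t • v) + lq = (q x₀ + lq) + t * q v := by
          simp [map_add, map_smul, smul_eq_mul]; ring
        simp only [aff]
        apply EReal.coe_le_coe_iff.2
        rw [h2]
        have := mul_le_mul_of_nonneg_left (hqc : q v ≤ c) ht0
        linarith
      have hflt : ((ρ₀ + t * c : ℝ) : EReal) < f (x₀ + t • v) := by
        refine lt_of_lt_of_le ?_ (hmb (x₀ + t • v))
        apply EReal.coe_lt_coe_iff.2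
        have h2 : pb (x₀ + t • v) + lb = pb x₀ + lb + t * pb v := by
          simp [map_add, map_smul, smul_eq_mul]; ring
        rw [h2]; linarith
      rw [hfg] at hflt
      exact absurd (hflt.trans_le hgle) (lt_irrefl _)
    · -- f = h : contradiction along -v
      have hbc' : 0 < c - pa v := by linarith
      set t := max 0 ((ρ₀ - (pa x₀ + la)) / (c - pa v)) + 1 with htdef
      have ht0 : 0 ≤ t := by
        have := le_max_left (0:ℝ) ((ρ₀ - (pa x₀ + la)) / (c - pa v)); rw [htdef]; linarith
      have htineq : ρ₀ - t * c < pa x₀ + la - t * pa v := by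
        have h2 : (ρ₀ - (pa x₀ + la)) / (c - pa v) < t := by
          have := le_max_right (0:ℝ) ((ρ₀ - (pa x₀ + la)) / (c - pa v)); rw [htdef]; linarith
        rw [div_lt_iff₀ hbc'] at h2
        nlinarith
      have hgle : h (x₀ - t • v) ≤ ((ρ₀ - t * c : ℝ) : EReal) := by
        refine iSup_le ?_
        rintro ⟨⟨q, lq⟩, hq, hqc⟩
        have h1 : q x₀ + lq ≤ ρ₀ := by
          have := hq x₀; rw [hfx₀] at this; exact EReal.coe_le_coe_iff.1 this
        have h2 : q (x₀ - t • v) + lq = (q x₀ + lq) - t * q v := by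
          simp [map_sub, map_smul, smul_eq_mul]; ring
        simp only [aff]
        apply EReal.coe_le_coe_iff.2
        rw [h2]
        have := mul_le_mul_of_nonneg_left (hqc : c ≤ q v) ht0
        linarith
      have hflt : ((ρ₀ - t * c : ℝ) : EReal) < f (x₀ - t • v) := by
        refine lt_of_lt_of_le ?_ (hma (x₀ - t • v))
        apply EReal.coe_lt_coe_iff.2
        have h2 : pa (x₀ - t • v) + la = pa x₀ + la - t * pa v := by
          simp [map_sub, map_smul, smul_eq_mul]; ring
        rw [h2]; linarith
      rw [hfh] at hflt
      exact absurd (hflt.trans_le hgle) (lt_irrefl _)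


end Hard

end Stmt18Aux

theorem stmt18 {X : Type*} [AddCommGroup X] [Module ℝ X] [TopologicalSpace X]
    [IsTopologicalAddGroup X] [ContinuousSMul ℝ X] [LocallyConvexSpace ℝ X] [T2Space X] :
    {f : X → EReal | SupIrredIn (PCLsc (X := X)) f} =
      {f | ∃ (p : X →L[ℝ] ℝ) (l : ℝ), f = fun x => ((p x + l : ℝ) : EReal)} := by
  ext f
  simp only [Set.mem_setOf_eq]
  constructor
  · intro hf
    exact Stmt18Aux.irred_affine hf
  · rintro ⟨p, l, rfl⟩
    exact Stmt18Aux.aff_supirred p l
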